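/- Let V : ℝ≥0 → ℝ≥0 be a continuously differentiable function along a trajectory satisfying the differential inequality dV/dt ≤ -k(c₁ V^{γ₁} + c₂ V^{γ₂}) with k, c₁, c₂ > 0, 0 < γ₁ < 1, and γ₂ > 1. Then V(t) = 0 for all t ≥ T* := 1/(k c₁ (1-γ₁)) + 1/(k c₂ (γ₂-1)), i.e., V reaches zero in a fixed time independent of V(0). -/

import Mathlib

open Set

theorem fixed_time_lyapunov (V V' : ℝ → ℝ) (k c₁ c₂ γ₁ γ₂ : ℝ)
    (hk : 0 < k) (hc₁ : 0 < c₁) (hc₂ : 0 < c₂)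
    (hγ₁ : 0 < γ₁) (hγ₁' : γ₁ < 1) (hγ₂ : 1 < γ₂)
    (hVnonneg : ∀ t, 0 ≤ t → 0 ≤ V t)
    (hderiv : ∀ t, 0 ≤ t → HasDerivAt V (V' t) t)
    (hineq : ∀ t, 0 ≤ t → V' t ≤ -k * (c₁ * (V t) ^ γ₁ + c₂ * (V t) ^ γ₂)) :
    ∀ t : ℝ, 1 / (k * c₁ * (1 - γ₁)) + 1 / (k * c₂ * (γ₂ - 1)) ≤ t → V t = 0 := by
  set T₁ : ℝ := 1 / (k * c₂ * (γ₂ - 1)) with hT₁def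
  set T₂ : ℝ := 1 / (k * c₁ * (1 - γ₁)) with hT₂def
  have hden₁ : 0 < k * c₂ * (γ₂ - 1) := by
    have : 0 < γ₂ - 1 := by linarith
    positivity
  have hden₂ : 0 < k * c₁ * (1 - γ₁) := by
    have : 0 < 1 - γ₁ := by linarith
    positivity
  have hT₁pos : 0 < T₁ := by rw [hT₁def]; positivity
  have hT₂pos : 0 < T₂ := by rw [hT₂def]; positivity
  -- V is nonincreasing on [0, ∞)
  have hmono : ∀ a b : ℝ, 0 ≤ a → a ≤ b → V b ≤ V a := by
    intro a b ha hab
    have hanti : AntitoneOn V (Icc a b) := by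
      apply antitoneOn_of_deriv_nonpos (convex_Icc a b)
      · intro x hx
        exact (hderiv x (ha.trans hx.1)).continuousAt.continuousWithinAt
      · intro x hx
        rw [interior_Icc] at hx
        exact ((hderiv x (ha.trans hx.1.le)).differentiableAt).differentiableWithinAt
      · intro x hx
        rw [interior_Icc] at hx
        have hx0 : (0:ℝ) ≤ x := ha.trans hx.1.le
        rw [(hderiv x hx0).deriv]
        have h1 : 0 ≤ (V x) ^ γ₁ := Real.rpow_nonneg (hVnonneg x hx0) γ₁
        have h2 : 0 ≤ (V x) ^ γ₂ := Real.rpow_nonneg (hVnonneg x hx0) γ₂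
        have h3 := hineq x hx0
        nlinarith [mul_nonneg (mul_nonneg hk.le hc₁.le) h1, mul_nonneg (mul_nonneg hk.le hc₂.le) h2]
    exact hanti (left_mem_Icc.mpr hab) (right_mem_Icc.mpr hab) hab
  -- Phase 1: V drops to ≤ 1 by time T₁
  have hphase1 : ∃ s, 0 ≤ s ∧ s ≤ T₁ ∧ V s ≤ 1 := by
    by_contra hcon
    push_neg at hcon
    have hVpos : ∀ s ∈ Icc (0:ℝ) T₁, 1 < V s := fun s hs => hcon s hs.1 hs.2
    set g : ℝ → ℝ := fun t => (V t) ^ (1 - γ₂) - k * c₂ * (γ₂ - 1) * t with hg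
    have hgderiv : ∀ x ∈ Ioo (0:ℝ) T₁,
        HasDerivAt g (V' x * (1 - γ₂) * (V x) ^ (1 - γ₂ - 1) - k * c₂ * (γ₂ - 1)) x := by
      intro x hx
      have hVx : 1 < V x := hVpos x ⟨hx.1.le, hx.2.le⟩
      have hVne : V x ≠ 0 := by linarith
      have hd1 : HasDerivAt (fun t => (V t) ^ (1 - γ₂))
          (V' x * (1 - γ₂) * (V x) ^ (1 - γ₂ - 1)) x :=
        (hderiv x hx.1.le).rpow_const (Or.inl hVne)
      have hd2 : HasDerivAt (fun t => k * c₂ * (γ₂ - 1) * t) (k * c₂ * (γ₂ - 1)) x := by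
        simpa using (hasDerivAt_id x).const_mul (k * c₂ * (γ₂ - 1))
      exact hd1.sub hd2
    have hgmono : MonotoneOn g (Icc 0 T₁) := by
      apply monotoneOn_of_deriv_nonneg (convex_Icc 0 T₁)
      · intro x hx
        rcases (Icc_subset_Icc_right le_rfl) hx with hx'
        have hVx : 1 < V x := hVpos x hx
        have hVne : V x ≠ 0 := by linarith
        exact (((hderiv x hx.1).rpow_const (Or.inl hVne)).sub
          (by simpa using (hasDerivAt_id x).const_mul (k * c₂ * (γ₂ - 1)) :
            HasDerivAt (fun t => k * c₂ * (γ₂ - 1) * t) (k * c₂ * (γ₂ - 1)) x)).continuousAt.continuousWithinAt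
      · intro x hx
        rw [interior_Icc] at hx
        exact ((hgderiv x hx).differentiableAt).differentiableWithinAt
      · intro x hx
        rw [interior_Icc] at hx
        rw [(hgderiv x hx).deriv]
        have hVx : 1 < V x := hVpos x ⟨hx.1.le, hx.2.le⟩
        have hVx0 : 0 < V x := by linarith
        have hA : 0 < (V x) ^ (1 - γ₂ - 1) := Real.rpow_pos_of_pos hVx0 _
        have hAq : (V x) ^ (1 - γ₂ - 1) * (V x) ^ γ₂ = 1 := by
          rw [← Real.rpow_add hVx0]
          norm_num
        have hq : 0 < (V x) ^ γ₂ := Real.rpow_pos_of_pos hVx0 _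
        have hp : 0 ≤ (V x) ^ γ₁ := Real.rpow_nonneg hVx0.le _
        have hV' : V' x ≤ -(k * c₂ * (V x) ^ γ₂) := by
          have := hineq x hx.1.le
          nlinarith
        have hprod : 0 ≤ (V x) ^ (1 - γ₂ - 1) * ((γ₂ - 1) * (-(V' x + k * c₂ * (V x) ^ γ₂))) := by
          apply mul_nonneg hA.le
          apply mul_nonneg (by linarith)
          linarith
        nlinarith [hprod, hAq]
    have hle := hgmono (left_mem_Icc.mpr hT₁pos.le) (right_mem_Icc.mpr hT₁pos.le) hT₁pos.le
    have hcancel : k * c₂ * (γ₂ - 1) * T₁ = 1 := by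
      rw [hT₁def]; exact mul_one_div_cancel hden₁.ne'
    have h0 : 0 ≤ (V 0) ^ (1 - γ₂) := Real.rpow_nonneg (hVnonneg 0 le_rfl) _
    have hlt1 : (V T₁) ^ (1 - γ₂) < 1 :=
      Real.rpow_lt_one_of_one_lt_of_neg (hVpos T₁ (right_mem_Icc.mpr hT₁pos.le)) (by linarith)
    simp only [hg] at hle
    rw [mul_comm] at hcancel
    nlinarith [hle, hcancel]
  -- Phase 2
  have hphase2 : ∀ s, 0 ≤ s → V s ≤ 1 → ∀ t, s + T₂ ≤ t → V t = 0 := by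
    intro s hs hVs t ht
    have key : ∃ r, s ≤ r ∧ r ≤ s + T₂ ∧ V r = 0 := by
      by_contra hcon
      push_neg at hcon
      have hVpos : ∀ r ∈ Icc s (s + T₂), 0 < V r := by
        intro r hr
        exact lt_of_le_of_ne (hVnonneg r (hs.trans hr.1)) (Ne.symm (hcon r hr.1 hr.2))
      set g : ℝ → ℝ := fun t => (V t) ^ (1 - γ₁) + k * c₁ * (1 - γ₁) * t with hg
      have hgderiv : ∀ x ∈ Ioo s (s + T₂),
          HasDerivAt g (V' x * (1 - γ₁) * (V x) ^ (1 - γ₁ - 1) + k * c₁ * (1 - γ₁)) x := by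
        intro x hx
        have hVx : 0 < V x := hVpos x ⟨hx.1.le, hx.2.le⟩
        have hd1 : HasDerivAt (fun t => (V t) ^ (1 - γ₁))
            (V' x * (1 - γ₁) * (V x) ^ (1 - γ₁ - 1)) x :=
          (hderiv x (hs.trans hx.1.le)).rpow_const (Or.inl hVx.ne')
        have hd2 : HasDerivAt (fun t => k * c₁ * (1 - γ₁) * t) (k * c₁ * (1 - γ₁)) x := by
          simpa using (hasDerivAt_id x).const_mul (k * c₁ * (1 - γ₁))
        exact hd1.add hd2
      have hganti : AntitoneOn g (Icc s (s + T₂)) := by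
        apply antitoneOn_of_deriv_nonpos (convex_Icc s (s + T₂))
        · intro x hx
          have hVx : 0 < V x := hVpos x hx
          exact (((hderiv x (hs.trans hx.1)).rpow_const (Or.inl hVx.ne')).add
            (by simpa using (hasDerivAt_id x).const_mul (k * c₁ * (1 - γ₁)) :
              HasDerivAt (fun t => k * c₁ * (1 - γ₁) * t) (k * c₁ * (1 - γ₁)) x)).continuousAt.continuousWithinAt
        · intro x hx
          rw [interior_Icc] at hx
          exact ((hgderiv x hx).differentiableAt).differentiableWithinAt
        · intro x hx
          rw [interior_Icc] at hx
          rw [(hgderiv x hx).deriv]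
          have hVx : 0 < V x := hVpos x ⟨hx.1.le, hx.2.le⟩
          have hx0 : (0:ℝ) ≤ x := hs.trans hx.1.le
          have hA : 0 < (V x) ^ (1 - γ₁ - 1) := Real.rpow_pos_of_pos hVx _
          have hAp : (V x) ^ (1 - γ₁ - 1) * (V x) ^ γ₁ = 1 := by
            rw [← Real.rpow_add hVx]
            norm_num
          have hp : 0 < (V x) ^ γ₁ := Real.rpow_pos_of_pos hVx _
          have hq : 0 ≤ (V x) ^ γ₂ := Real.rpow_nonneg hVx.le _
          have hV' : V' x ≤ -(k * c₁ * (V x) ^ γ₁) := by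
            have := hineq x hx0
            nlinarith
          have hprod : 0 ≤ (V x) ^ (1 - γ₁ - 1) * ((1 - γ₁) * (-(V' x + k * c₁ * (V x) ^ γ₁))) := by
            apply mul_nonneg hA.le
            apply mul_nonneg (by linarith)
            linarith
          nlinarith [hprod, hAp]
      have hle := hganti (left_mem_Icc.mpr (by linarith)) (right_mem_Icc.mpr (by linarith))
        (by linarith)
      have hcancel : k * c₁ * (1 - γ₁) * T₂ = 1 := by
        rw [hT₂def]; exact mul_one_div_cancel hden₂.ne'
      have hs1 : (V s) ^ (1 - γ₁) ≤ 1 :=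
        Real.rpow_le_one (hVnonneg s hs) hVs (by linarith)
      have hend : 0 < (V (s + T₂)) ^ (1 - γ₁) :=
        Real.rpow_pos_of_pos (hVpos (s + T₂) (right_mem_Icc.mpr (by linarith))) _
      simp only [hg] at hle
      nlinarith [hle, hcancel]
    obtain ⟨r, hr1, hr2, hr0⟩ := key
    have h1 : V t ≤ V r := hmono r t (hs.trans hr1) (hr2.trans ht)
    have h2 : 0 ≤ V t := hVnonneg t (by linarith)
    linarith [hr0 ▸ h1]
  intro t ht
  obtain ⟨s, hs0, hsT, hVs⟩ := hphase1
  exact hphase2 s hs0 hVs t (by linarith)
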